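/- arXiv:1007.5267 — 2 statements merged into one kernel-verified Lean document; each statement's English description precedes it below -/
import Mathlib

section
/- Let 0 < λ_bad < λ_good with λ_good·λ_bad > 1, and consider n ≥ 2 patches whose period-2 intrinsic fitnesses satisfy λ_t^j ∈ {λ_good, λ_bad}, λ₁^j ≠ λ₂^j for every j (each patch alternates between good and bad years), and λ₁^j ≠ λ₁^k for some pair j, k (spatial asynchrony). Let a > 0, λ̄_t = (1/n)∑_j λ_t^j, let x̂^j(t) = (λ̄₁λ̄₂ − 1)/(a(1 + λ̄_t)) be the period-2 orbit of the fully dispersive phenotype (d = 1) with uniform dispersal S_{kj} = 1/n, and let F_t be the diagonal matrix with entries (F_t)_{jj} = λ_t^j/(1 + a x̂^j(t)). Then: (1) for every patch j, (F₁)_{jj}(F₂)_{jj} = λ_good·λ_bad/(λ̄₁λ̄₂) < 1, so every patch is a sink; and (2) for every d̃ ∈ [0, 1), the spectral radius ρ(S(d̃)F₂S(d̃)F₁) < 1, where S(d̃) = (1−d̃)I + d̃S; hence d = 1 is an evolutionarily stable strategy. -/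
set_option maxHeartbeats 1600000

open Matrix

/-- The spectral radius of a real square matrix: the maximum modulus of its complex
eigenvalues. -/
noncomputable def specRad {n : ℕ} (M : Matrix (Fin n) (Fin n) ℝ) : ℝ :=
  sSup ((fun μ => ‖μ‖) '' spectrum ℂ (M.map (fun x => (x : ℂ))))


lemma eig_of_mem_spectrum {n : ℕ} (N : Matrix (Fin n) (Fin n) ℂ) (μ : ℂ)
    (h : μ ∈ spectrum ℂ N) : ∃ x : Fin n → ℂ, x ≠ 0 ∧ N.mulVec x = μ • x := by
  have h1 : ¬ IsUnit (μ • (1 : Matrix (Fin n) (Fin n) ℂ) - N) := by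
    simpa [Algebra.algebraMap_eq_smul_one] using (spectrum.mem_iff.mp h)
  have hdet : (μ • (1 : Matrix (Fin n) (Fin n) ℂ) - N).det = 0 := by
    by_contra hd
    exact h1 ((Matrix.isUnit_iff_isUnit_det _).mpr (isUnit_iff_ne_zero.mpr hd))
  obtain ⟨x, hx0, hx⟩ := (Matrix.exists_mulVec_eq_zero_iff).mpr hdet
  refine ⟨x, hx0, ?_⟩
  have := hx
  rw [Matrix.sub_mulVec, Matrix.smul_mulVec, Matrix.one_mulVec, sub_eq_zero] at this
  exact this.symm

lemma specRad_le_of_dom {n : ℕ} (N : Matrix (Fin n) (Fin n) ℝ)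
    (hN : ∀ k j, 0 ≤ N k j) (v : Fin n → ℝ) (hv : ∀ k, 0 < v k) (c : ℝ) (hc : 0 ≤ c)
    (h : ∀ k, N.mulVec v k ≤ c * v k) : specRad N ≤ c := by
  apply Real.sSup_le _ hc
  rintro y ⟨μ, hμ, rfl⟩
  obtain ⟨x, hx0, hx⟩ := eig_of_mem_spectrum _ μ hμ
  -- pick index maximizing |x j| / v j
  obtain ⟨j0, hj0⟩ := Function.ne_iff.mp hx0
  obtain ⟨k, -, hk⟩ := Finset.exists_max_image Finset.univ
    (fun j => ‖x j‖ / v j) ⟨j0, Finset.mem_univ j0⟩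
  have hk' : ∀ j, ‖x j‖ / v j ≤ ‖x k‖ / v k := fun j =>
    hk j (Finset.mem_univ j)
  have hxk : 0 < ‖x k‖ := by
    by_contra hcon
    push_neg at hcon
    have hk0 : ‖x k‖ = 0 := le_antisymm hcon (norm_nonneg _)
    have := hk' j0
    rw [hk0, zero_div] at this
    have hj0pos : 0 < ‖x j0‖ / v j0 :=
      div_pos (norm_pos_iff.mpr hj0) (hv j0)
    linarith
  -- key bound
  have hb : ∀ j, ‖x j‖ ≤ (‖x k‖ / v k) * v j := fun j => by
    have := hk' j
    rw [div_le_div_iff₀ (hv j) (hv k)] at this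
    rw [div_mul_eq_mul_div, le_div_iff₀ (hv k)]
    linarith
  have key : ‖μ‖ * ‖x k‖ ≤ c * ‖x k‖ := by
    have h1 : ‖μ‖ * ‖x k‖ = ‖(N.map (fun x => (x:ℂ))).mulVec x k‖ := by
      rw [hx]; simp [Pi.smul_apply, _root_.map_mul]
    rw [h1]
    have h2 : (N.map (fun x => (x:ℂ))).mulVec x k = ∑ j, (N k j : ℂ) * x j := by
      simp [Matrix.mulVec, dotProduct, Matrix.map_apply]
    rw [h2]
    calc ‖∑ j, (N k j : ℂ) * x j‖ ≤ ∑ j, ‖(N k j : ℂ) * x j‖ :=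
          norm_sum_le _ _
      _ = ∑ j, N k j * ‖x j‖ := by
          apply Finset.sum_congr rfl; intro j _
          rw [norm_mul, Complex.norm_real, Real.norm_eq_abs, abs_of_nonneg (hN k j)]
      _ ≤ ∑ j, N k j * ((‖x k‖ / v k) * v j) := by
          apply Finset.sum_le_sum; intro j _
          exact mul_le_mul_of_nonneg_left (hb j) (hN k j)
      _ = (‖x k‖ / v k) * ∑ j, N k j * v j := by
          rw [Finset.mul_sum]; apply Finset.sum_congr rfl; intro j _; ring
      _ = (‖x k‖ / v k) * (N.mulVec v k) := by
          simp [Matrix.mulVec, dotProduct]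
      _ ≤ (‖x k‖ / v k) * (c * v k) := by
          apply mul_le_mul_of_nonneg_left (h k)
          exact div_nonneg hxk.le (hv k).le
      _ = c * ‖x k‖ := by
          field_simp [ne_of_gt (hv k)]
  exact le_of_mul_le_mul_right (by linarith [key]) hxk


private lemma Wgb_aux (g b p : ℝ) (hb : 0 < b) (hbg : b < g) (hp0 : 0 < p) (hp1 : p < 1) :
    g*b < (g*p + b*(1-p))*(b*p + g*(1-p)) := by
  nlinarith [mul_pos (mul_pos hp0 (sub_pos.mpr hbg)) (mul_pos (sub_pos.mpr hp1) (sub_pos.mpr hbg))]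

private lemma trlt_aux (s q dt : ℝ) (hs0 : 0 < s) (hs1 : s < 1) (hq0 : 0 < q) (hq1 : q < 1)
    (hs : s = 1 - dt) : 2*s^2*q + dt*(2*s*q + dt) < 2 := by
  nlinarith [mul_pos hs0 (sub_pos.mpr hq1), mul_pos (mul_pos hs0 hs0) (sub_pos.mpr hq1),
    sq_nonneg (1-s)]

private lemma Epos_aux (s q : ℝ) (hs0 : 0 < s) (hs1 : s < 1) (hq0 : 0 < q) (hq1 : q < 1) :
    0 < s*(1-q)*(2 - s*(1+q)) := by
  apply mul_pos (mul_pos hs0 (by linarith))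
  nlinarith

lemma key_perron (g b p s dt α β : ℝ)
    (hb : 0 < b) (hbg : b < g) (hp0 : 0 < p) (hp1 : p < 1)
    (hdt0 : 0 < dt) (hdt1 : dt < 1) (hs : s = 1 - dt)
    (hα : α = (1 + (g*p + b*(1-p))) / ((g*p + b*(1-p)) + (g*p + b*(1-p))*(b*p + g*(1-p))))
    (hβ : β = (1 + (b*p + g*(1-p))) / ((b*p + g*(1-p)) + (g*p + b*(1-p))*(b*p + g*(1-p)))) :
    ∃ vG vB lam : ℝ, 0 < vG ∧ 0 < vB ∧ 0 ≤ lam ∧ lam < 1 ∧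
      (∀ vg vb : ℝ, vg = vG → vb = vB →
        s*(b*β*(s*(g*α*vg) + dt*(p*(g*α*vg) + (1-p)*(b*α*vb))))
          + dt*(p*(b*β*(s*(g*α*vg) + dt*(p*(g*α*vg) + (1-p)*(b*α*vb))))
               + (1-p)*(g*β*(s*(b*α*vb) + dt*(p*(g*α*vg) + (1-p)*(b*α*vb))))) = lam*vg
        ∧
        s*(g*β*(s*(b*α*vb) + dt*(p*(g*α*vg) + (1-p)*(b*α*vb))))
          + dt*(p*(b*β*(s*(g*α*vg) + dt*(p*(g*α*vg) + (1-p)*(b*α*vb))))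
               + (1-p)*(g*β*(s*(b*α*vb) + dt*(p*(g*α*vg) + (1-p)*(b*α*vb))))) = lam*vb) := by
  have hg : 0 < g := lt_trans hb hbg
  have hs0 : 0 < s := by linarith
  have hs1 : s < 1 := by linarith
  have hL0pos : 0 < g*p + b*(1-p) := add_pos (mul_pos hg hp0) (mul_pos hb (by linarith))
  have hL1pos : 0 < b*p + g*(1-p) := add_pos (mul_pos hb hp0) (mul_pos hg (by linarith))
  have hWpos : 0 < (g*p + b*(1-p))*(b*p + g*(1-p)) := mul_pos hL0pos hL1pos
  have hWgb : g*b < (g*p + b*(1-p))*(b*p + g*(1-p)) := Wgb_aux g b p hb hbg hp0 hp1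
  have hd1 : 0 < (g*p + b*(1-p)) + (g*p + b*(1-p))*(b*p + g*(1-p)) := by positivity
  have hd2 : 0 < (b*p + g*(1-p)) + (g*p + b*(1-p))*(b*p + g*(1-p)) := by positivity
  have hα0 : 0 < α := by rw [hα]; exact div_pos (by linarith) hd1
  have hβ0 : 0 < β := by rw [hβ]; exact div_pos (by linarith) hd2
  have hab : α*β*((g*p + b*(1-p))*(b*p + g*(1-p))) = 1 := by
    rw [hα, hβ, div_mul_div_comm, div_mul_eq_mul_div, div_eq_one_iff_eq (ne_of_gt (mul_pos hd1 hd2))]; ring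
  have hq0 : 0 < g*b*(α*β) := by positivity
  have hq1 : g*b*(α*β) < 1 := by
    have h1 : (g*b*(α*β))*((g*p + b*(1-p))*(b*p + g*(1-p))) = g*b := by
      linear_combination (g*b)*hab
    refine (mul_lt_mul_iff_of_pos_right hWpos).mp ?_
    rw [h1, one_mul]; exact hWgb
  -- the 2x2 matrix
  obtain ⟨T11, hT11def⟩ : ∃ x : ℝ, x = s^2*(g*b*(α*β)) + dt*((s*(b*β) + dt*(β*(b*p + g*(1-p))))*(α*(g*p)) + s*(g*b*(α*β))*p) := ⟨_, rfl⟩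
  obtain ⟨T12, hT12def⟩ : ∃ x : ℝ, x = dt*((s*(b*β) + dt*(β*(b*p + g*(1-p))))*(α*(b*(1-p))) + s*(g*b*(α*β))*(1-p)) := ⟨_, rfl⟩
  obtain ⟨T21, hT21def⟩ : ∃ x : ℝ, x = dt*((s*(g*β) + dt*(β*(b*p + g*(1-p))))*(α*(g*p)) + s*(g*b*(α*β))*p) := ⟨_, rfl⟩
  obtain ⟨T22, hT22def⟩ : ∃ x : ℝ, x = s^2*(g*b*(α*β)) + dt*((s*(g*β) + dt*(β*(b*p + g*(1-p))))*(α*(b*(1-p))) + s*(g*b*(α*β))*(1-p)) := ⟨_, rfl⟩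
  have hT12pos : 0 < T12 := by
    rw [hT12def]
    apply mul_pos hdt0
    apply add_pos
    · exact mul_pos (add_pos (mul_pos hs0 (mul_pos hb hβ0)) (mul_pos hdt0 (mul_pos hβ0 hL1pos)))
        (mul_pos hα0 (mul_pos hb (by linarith)))
    · exact mul_pos (mul_pos hs0 hq0) (by linarith)
  have hT21pos : 0 < T21 := by
    rw [hT21def]
    apply mul_pos hdt0
    apply add_pos
    · exact mul_pos (add_pos (mul_pos hs0 (mul_pos hg hβ0)) (mul_pos hdt0 (mul_pos hβ0 hL1pos)))
        (mul_pos hα0 (mul_pos hg hp0))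
    · exact mul_pos (mul_pos hs0 hq0) hp0
  have hT11nn : 0 ≤ T11 := by
    rw [hT11def]
    have h1 : 0 ≤ s^2*(g*b*(α*β)) := mul_nonneg (sq_nonneg s) hq0.le
    have h2 : 0 < dt*((s*(b*β) + dt*(β*(b*p + g*(1-p))))*(α*(g*p)) + s*(g*b*(α*β))*p) :=
      mul_pos hdt0 (add_pos (mul_pos (add_pos (mul_pos hs0 (mul_pos hb hβ0)) (mul_pos hdt0 (mul_pos hβ0 hL1pos))) (mul_pos hα0 (mul_pos hg hp0))) (mul_pos (mul_pos hs0 hq0) hp0))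
    linarith
  have hT22nn : 0 ≤ T22 := by
    rw [hT22def]
    have h1 : 0 ≤ s^2*(g*b*(α*β)) := mul_nonneg (sq_nonneg s) hq0.le
    have h2 : 0 < dt*((s*(g*β) + dt*(β*(b*p + g*(1-p))))*(α*(b*(1-p))) + s*(g*b*(α*β))*(1-p)) :=
      mul_pos hdt0 (add_pos (mul_pos (add_pos (mul_pos hs0 (mul_pos hg hβ0)) (mul_pos hdt0 (mul_pos hβ0 hL1pos))) (mul_pos hα0 (mul_pos hb (by linarith : (0:ℝ) < 1 - p)))) (mul_pos (mul_pos hs0 hq0) (by linarith : (0:ℝ) < 1 - p)))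
    linarith
  have htr : T11 + T22 = 2*s^2*(g*b*(α*β)) + dt*(2*s*(g*b*(α*β)) + dt) := by
    rw [hT11def, hT22def]; linear_combination (dt^2) * hab
  have hdet : T11*T22 - T12*T21 = (s^2*(g*b*(α*β)))^2 + s^2*(g*b*(α*β))*(dt*(2*s*(g*b*(α*β)) + dt)) - dt^2*s^2*(g*b*(α*β))*(1 - g*b*(α*β)) := by
    rw [hT11def, hT12def, hT21def, hT22def]; ring
  obtain ⟨dd, hdddef⟩ : ∃ x : ℝ, x = (T11 - T22)^2 + 4*(T12*T21) := ⟨_, rfl⟩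
  have hddpos : 0 < dd := by
    rw [hdddef]
    have h1 := sq_nonneg (T11 - T22)
    have h2 := mul_pos hT12pos hT21pos
    linarith
  have hdd0 : 0 ≤ dd := hddpos.le
  obtain ⟨u, hudef⟩ : ∃ x : ℝ, x = Real.sqrt dd := ⟨_, rfl⟩
  have hu0 : 0 ≤ u := by rw [hudef]; exact Real.sqrt_nonneg _
  have hu2 : u^2 = dd := by rw [hudef]; exact Real.sq_sqrt hdd0
  obtain ⟨lam, hlamdef⟩ : ∃ x : ℝ, x = ((T11 + T22) + u)/2 := ⟨_, rfl⟩
  have htrlt : T11 + T22 < 2 := by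
    rw [htr]; exact trlt_aux s (g*b*(α*β)) dt hs0 hs1 hq0 hq1 hs
  have hEval : 1 - (T11 + T22) + (T11*T22 - T12*T21)
      = s*(1 - g*b*(α*β))*(2 - s*(1 + g*b*(α*β))) := by
    rw [htr, hdet]
    linear_combination (-1 - dt + s - 2*s*(g*b*(α*β)) + s^2*(g*b*(α*β))^2 + s^2*dt*(g*b*(α*β))^2 + s^3*(g*b*(α*β))^2) * hs
  have hEpos : 0 < s*(1 - g*b*(α*β))*(2 - s*(1 + g*b*(α*β))) :=
    Epos_aux s (g*b*(α*β)) hs0 hs1 hq0 hq1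
  have hgap : dd < (2 - (T11 + T22))^2 := by
    have h4 : (2 - (T11 + T22))^2 - dd = 4*(1 - (T11 + T22) + (T11*T22 - T12*T21)) := by
      rw [hdddef]; ring
    linarith [hEval, hEpos, h4]
  have hult : u < 2 - (T11 + T22) := by
    rw [hudef]
    exact (Real.sqrt_lt' (by linarith)).mpr hgap
  have hlam1 : lam < 1 := by rw [hlamdef]; linarith
  have hlam0 : 0 ≤ lam := by rw [hlamdef]; linarith
  have hvB : 0 < lam - T11 := by
    rcases le_or_gt T11 T22 with hc | hc
    · have hup : 0 < u := by rw [hudef]; exact Real.sqrt_pos.mpr hddpos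
      rw [hlamdef]; linarith
    · have h1 : T11 - T22 < u := by
        rw [hudef]
        refine (Real.lt_sqrt (by linarith)).mpr ?_
        rw [hdddef]
        have h2 := mul_pos hT12pos hT21pos
        linarith
      rw [hlamdef]; linarith
  have hchar : lam*lam - (T11 + T22)*lam + (T11*T22 - T12*T21) = 0 := by
    rw [hlamdef]
    linear_combination (1/4)*hu2 + (1/4)*hdddef
  refine ⟨T12, lam - T11, lam, hT12pos, hvB, hlam0, hlam1, ?_⟩
  intro vg vb hvg hvb
  rw [hvg, hvb]
  constructor
  · have hrow : s*(b*β*(s*(g*α*T12) + dt*(p*(g*α*T12) + (1-p)*(b*α*(lam - T11)))))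
          + dt*(p*(b*β*(s*(g*α*T12) + dt*(p*(g*α*T12) + (1-p)*(b*α*(lam - T11)))))
               + (1-p)*(g*β*(s*(b*α*(lam - T11)) + dt*(p*(g*α*T12) + (1-p)*(b*α*(lam - T11))))))
        = T11*T12 + T12*(lam - T11) := by
      rw [hT11def, hT12def]; ring
    rw [hrow]; ring
  · have hrow : s*(g*β*(s*(b*α*(lam - T11)) + dt*(p*(g*α*T12) + (1-p)*(b*α*(lam - T11)))))
          + dt*(p*(b*β*(s*(g*α*T12) + dt*(p*(g*α*T12) + (1-p)*(b*α*(lam - T11)))))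
               + (1-p)*(g*β*(s*(b*α*(lam - T11)) + dt*(p*(g*α*T12) + (1-p)*(b*α*(lam - T11))))))
        = T21*T12 + T22*(lam - T11) := by
      rw [hT11def, hT12def, hT21def, hT22def]; ring
    rw [hrow]
    linear_combination (-1)*hchar

private lemma key_perron0 (g b p dt α β : ℝ)
    (hb : 0 < b) (hbg : b < g) (hp0 : 0 < p) (hp1 : p < 1)
    (hdt0 : dt = 0)
    (hα : α = (1 + (g*p + b*(1-p))) / ((g*p + b*(1-p)) + (g*p + b*(1-p))*(b*p + g*(1-p))))
    (hβ : β = (1 + (b*p + g*(1-p))) / ((b*p + g*(1-p)) + (g*p + b*(1-p))*(b*p + g*(1-p)))) :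
    ∃ vG vB lam : ℝ, 0 < vG ∧ 0 < vB ∧ 0 ≤ lam ∧ lam < 1 ∧
      (∀ vg vb : ℝ, vg = vG → vb = vB →
        (1-dt)*(b*β*((1-dt)*(g*α*vg) + dt*(p*(g*α*vg) + (1-p)*(b*α*vb))))
          + dt*(p*(b*β*((1-dt)*(g*α*vg) + dt*(p*(g*α*vg) + (1-p)*(b*α*vb))))
               + (1-p)*(g*β*((1-dt)*(b*α*vb) + dt*(p*(g*α*vg) + (1-p)*(b*α*vb))))) = lam*vg
        ∧
        (1-dt)*(g*β*((1-dt)*(b*α*vb) + dt*(p*(g*α*vg) + (1-p)*(b*α*vb))))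
          + dt*(p*(b*β*((1-dt)*(g*α*vg) + dt*(p*(g*α*vg) + (1-p)*(b*α*vb))))
               + (1-p)*(g*β*((1-dt)*(b*α*vb) + dt*(p*(g*α*vg) + (1-p)*(b*α*vb))))) = lam*vb) := by
  have hg : 0 < g := lt_trans hb hbg
  have hL0pos : 0 < g*p + b*(1-p) := add_pos (mul_pos hg hp0) (mul_pos hb (by linarith))
  have hL1pos : 0 < b*p + g*(1-p) := add_pos (mul_pos hb hp0) (mul_pos hg (by linarith))
  have hWpos : 0 < (g*p + b*(1-p))*(b*p + g*(1-p)) := mul_pos hL0pos hL1pos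
  have hWgb : g*b < (g*p + b*(1-p))*(b*p + g*(1-p)) := Wgb_aux g b p hb hbg hp0 hp1
  have hd1 : 0 < (g*p + b*(1-p)) + (g*p + b*(1-p))*(b*p + g*(1-p)) := by positivity
  have hd2 : 0 < (b*p + g*(1-p)) + (g*p + b*(1-p))*(b*p + g*(1-p)) := by positivity
  have hα0 : 0 < α := by rw [hα]; exact div_pos (by linarith) hd1
  have hβ0 : 0 < β := by rw [hβ]; exact div_pos (by linarith) hd2
  have hab : α*β*((g*p + b*(1-p))*(b*p + g*(1-p))) = 1 := by
    rw [hα, hβ, div_mul_div_comm, div_mul_eq_mul_div, div_eq_one_iff_eq (ne_of_gt (mul_pos hd1 hd2))]; ring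
  have hq0 : 0 < g*b*(α*β) := by positivity
  have hq1 : g*b*(α*β) < 1 := by
    have h1 : (g*b*(α*β))*((g*p + b*(1-p))*(b*p + g*(1-p))) = g*b := by
      linear_combination (g*b)*hab
    refine (mul_lt_mul_iff_of_pos_right hWpos).mp ?_
    rw [h1, one_mul]; exact hWgb
  refine ⟨1, 1, g*b*(α*β), one_pos, one_pos, hq0.le, hq1, ?_⟩
  intro vg vb hvg hvb
  rw [hvg, hvb, hdt0]
  constructor <;> ring

/-- In a Beverton–Holt landscape where each patch alternates between a good year
(`λ_good`) and a bad year (`λ_bad`), with some spatial asynchrony and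
`λ_good λ_bad > 1`: along the period-2 orbit of the fully dispersive phenotype
every patch is a sink (the product of within-patch fitnesses equals
`λ_good λ_bad/(λ̄₁λ̄₂) < 1`), and every mutant dispersal rate `d̃ ∈ [0,1)` has invasion
rate below one, so full dispersal `d = 1` is an ESS. -/
theorem full_dispersal_ESS {n : ℕ} (hn : 2 ≤ n)
    (lg lb : ℝ) (hlb : 0 < lb) (hlbg : lb < lg) (hgm : 1 < lg * lb)
    (a : ℝ) (ha : 0 < a)
    (lam : Fin 2 → Fin n → ℝ)
    (hval : ∀ t j, lam t j = lg ∨ lam t j = lb)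
    (halt : ∀ j, lam 0 j ≠ lam 1 j)
    (hasync : ∃ j k, lam 0 j ≠ lam 0 k)
    (lbar : Fin 2 → ℝ) (hlbar : ∀ t, lbar t = (∑ j, lam t j) / n)
    (xhat : Fin 2 → Fin n → ℝ)
    (hxhat : ∀ t j, xhat t j = (lbar 0 * lbar 1 - 1) / (a * (1 + lbar t)))
    (S : Matrix (Fin n) (Fin n) ℝ) (hS : ∀ k j, S k j = 1 / n)
    (F : Fin 2 → Matrix (Fin n) (Fin n) ℝ)
    (hF : ∀ t, F t = Matrix.diagonal fun j => lam t j / (1 + a * xhat t j)) :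
    (∀ j, (F 0).diag j * (F 1).diag j = lg * lb / (lbar 0 * lbar 1) ∧
      lg * lb / (lbar 0 * lbar 1) < 1) ∧
    (∀ dt : ℝ, 0 ≤ dt → dt < 1 →
      specRad (((1 - dt) • 1 + dt • S) * F 1 * (((1 - dt) • 1 + dt • S) * F 0)) < 1) := by
  classical
  have hg : 0 < lg := lt_trans hlb hlbg
  have hgne : lg ≠ lb := hlbg.ne'
  have hn0 : 0 < n := lt_of_lt_of_le (by norm_num) hn
  have hnR : (0:ℝ) < (n:ℝ) := by exact_mod_cast hn0
  -- values of lam 1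
  have hlam1g : ∀ j, lam 0 j = lg → lam 1 j = lb := by
    intro j hj
    rcases hval 1 j with h | h
    · exact absurd (hj.trans h.symm) (halt j)
    · exact h
  have hlam0b : ∀ j, lam 0 j ≠ lg → lam 0 j = lb := by
    intro j hj; rcases hval 0 j with h | h
    · exact absurd h hj
    · exact h
  have hlam1b : ∀ j, lam 0 j ≠ lg → lam 1 j = lg := by
    intro j hj
    rcases hval 1 j with h | h
    · exact h
    · exact absurd ((hlam0b j hj).trans h.symm) (halt j)
  -- the set of good-at-0 patches
  set G : Finset (Fin n) := Finset.univ.filter (fun j => lam 0 j = lg) with hG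
  set m : ℕ := G.card with hm
  -- async gives both types
  obtain ⟨j₁, j₂, hj12⟩ := hasync
  have hex1 : ∃ j, lam 0 j = lg := by
    rcases hval 0 j₁ with h | h
    · exact ⟨j₁, h⟩
    · refine ⟨j₂, ?_⟩
      rcases hval 0 j₂ with h2 | h2
      · exact h2
      · exact absurd (h.trans h2.symm) hj12
  have hex2 : ∃ j, lam 0 j ≠ lg := by
    rcases hval 0 j₁ with h | h
    · refine ⟨j₂, ?_⟩
      rcases hval 0 j₂ with h2 | h2
      · exact absurd (h.trans h2.symm) hj12
      · rw [h2]; exact hlbg.ne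
    · exact ⟨j₁, by rw [h]; exact hlbg.ne⟩
  obtain ⟨jg, hjg⟩ := hex1
  obtain ⟨jb, hjb⟩ := hex2
  have hm1 : 0 < m := by
    rw [hm]
    exact Finset.card_pos.mpr ⟨jg, by rw [hG]; exact Finset.mem_filter.mpr ⟨Finset.mem_univ _, hjg⟩⟩
  have hmn : m < n := by
    rw [hm]
    have hss : G ⊂ Finset.univ := by
      rw [Finset.ssubset_def]
      refine ⟨Finset.subset_univ _, fun hsub => ?_⟩
      exact hjb (Finset.mem_filter.mp (hsub (Finset.mem_univ jb))).2
    simpa using Finset.card_lt_card hss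
  have hmle : m ≤ n := le_of_lt hmn
  have hmR : (0:ℝ) < (m:ℝ) := by exact_mod_cast hm1
  have hmnR : (m:ℝ) < (n:ℝ) := by exact_mod_cast hmn
  -- sums of two-valued functions
  have hsum_ite : ∀ cG cB : ℝ, (∑ j, if lam 0 j = lg then cG else cB)
      = (m:ℝ)*cG + ((n:ℝ)-(m:ℝ))*cB := by
    intro cG cB
    rw [Finset.sum_ite, Finset.sum_const, Finset.sum_const]
    have hc2 : (Finset.univ.filter (fun j => ¬ lam 0 j = lg)).card = n - m := by
      have h := Finset.card_filter_add_card_filter_not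
        (s := (Finset.univ : Finset (Fin n))) (p := fun j => lam 0 j = lg)
      simp only [Finset.card_univ, Fintype.card_fin] at h
      have hmG : m = (Finset.univ.filter (fun j => lam 0 j = lg)).card := by rw [hm, hG]
      omega
    rw [hc2, ← hG, ← hm, nsmul_eq_mul, nsmul_eq_mul]
    have : ((n - m : ℕ) : ℝ) = (n:ℝ) - (m:ℝ) := by
      rw [Nat.cast_sub hmle]
    rw [this]
  -- lbar values
  have hl0 : lbar 0 = lg*((m:ℝ)/(n:ℝ)) + lb*(1-(m:ℝ)/(n:ℝ)) := by
    rw [hlbar 0]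
    have h1 : (∑ j, lam 0 j) = ∑ j, (if lam 0 j = lg then lg else lb) := by
      refine Finset.sum_congr rfl (fun j _ => ?_)
      by_cases hj : lam 0 j = lg
      · rw [if_pos hj]; exact hj
      · rw [if_neg hj]; exact hlam0b j hj
    rw [h1, hsum_ite]
    field_simp
  have hl1 : lbar 1 = lb*((m:ℝ)/(n:ℝ)) + lg*(1-(m:ℝ)/(n:ℝ)) := by
    rw [hlbar 1]
    have h1 : (∑ j, lam 1 j) = ∑ j, (if lam 0 j = lg then lb else lg) := by
      refine Finset.sum_congr rfl (fun j _ => ?_)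
      by_cases hj : lam 0 j = lg
      · rw [if_pos hj]; exact hlam1g j hj
      · rw [if_neg hj]; exact hlam1b j hj
    rw [h1, hsum_ite]
    field_simp
  have hp0 : 0 < (m:ℝ)/(n:ℝ) := div_pos hmR hnR
  have hp1 : (m:ℝ)/(n:ℝ) < 1 := (div_lt_one hnR).mpr hmnR
  have hl0pos : 0 < lbar 0 := by
    rw [hl0]; exact add_pos (mul_pos hg hp0) (mul_pos hlb (by linarith))
  have hl1pos : 0 < lbar 1 := by
    rw [hl1]; exact add_pos (mul_pos hlb hp0) (mul_pos hg (by linarith))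
  have hLpos : 0 < lbar 0 * lbar 1 := mul_pos hl0pos hl1pos
  have hLgb : lg * lb < lbar 0 * lbar 1 := by
    rw [hl0, hl1]; exact Wgb_aux lg lb ((m:ℝ)/(n:ℝ)) hlb hlbg hp0 hp1
  have h1l : ∀ t : Fin 2, 0 < 1 + lbar t := by
    intro t
    fin_cases t
    · show (0:ℝ) < 1 + lbar 0; linarith
    · show (0:ℝ) < 1 + lbar 1; linarith
  have hden : ∀ t : Fin 2, 0 < lbar t + lbar 0 * lbar 1 := by
    intro t
    fin_cases t
    · show (0:ℝ) < lbar 0 + lbar 0 * lbar 1; nlinarith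
    · show (0:ℝ) < lbar 1 + lbar 0 * lbar 1; nlinarith
  -- diagonal entries
  have hfdiag : ∀ t j, lam t j / (1 + a * xhat t j)
      = lam t j * ((1 + lbar t)/(lbar t + lbar 0 * lbar 1)) := by
    intro t j
    rw [hxhat t j]
    have h1 : 1 + a * ((lbar 0 * lbar 1 - 1) / (a * (1 + lbar t)))
        = (lbar t + lbar 0 * lbar 1)/(1 + lbar t) := by
      field_simp [ne_of_gt ha, ne_of_gt (h1l t)]
      ring
    rw [h1, div_div_eq_mul_div, mul_div_assoc]
  -- ===== Part 1 =====
  have hd0 : ∀ j, (F 0).diag j = lam 0 j * ((1 + lbar 0)/(lbar 0 + lbar 0 * lbar 1)) := by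
    intro j
    calc (F 0).diag j = lam 0 j / (1 + a * xhat 0 j) := by rw [hF 0, Matrix.diag_diagonal]
      _ = _ := hfdiag 0 j
  have hd1 : ∀ j, (F 1).diag j = lam 1 j * ((1 + lbar 1)/(lbar 1 + lbar 0 * lbar 1)) := by
    intro j
    calc (F 1).diag j = lam 1 j / (1 + a * xhat 1 j) := by rw [hF 1, Matrix.diag_diagonal]
      _ = _ := hfdiag 1 j
  have hprod : ∀ x y : ℝ, x * ((1 + lbar 0)/(lbar 0 + lbar 0 * lbar 1))
      * (y * ((1 + lbar 1)/(lbar 1 + lbar 0 * lbar 1))) = x * y / (lbar 0 * lbar 1) := by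
    intro x y
    have hne0 : lbar 0 + lbar 0 * lbar 1 ≠ 0 := ne_of_gt (hden 0)
    have hne1 : lbar 1 + lbar 0 * lbar 1 ≠ 0 := ne_of_gt (hden 1)
    field_simp
  refine ⟨?_, ?_⟩
  · intro j
    refine ⟨?_, (div_lt_one hLpos).mpr hLgb⟩
    rw [hd0 j, hd1 j]
    by_cases hj : lam 0 j = lg
    · rw [hj, hlam1g j hj, hprod]
    · rw [hlam0b j hj, hlam1b j hj, hprod, mul_comm lb lg]
  -- ===== Part 2 =====
  · intro dt hdt0 hdt1
    obtain ⟨α', hα'⟩ : ∃ x : ℝ, x = (1 + lbar 0)/(lbar 0 + lbar 0 * lbar 1) := ⟨_, rfl⟩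
    obtain ⟨β', hβ'⟩ : ∃ x : ℝ, x = (1 + lbar 1)/(lbar 1 + lbar 0 * lbar 1) := ⟨_, rfl⟩
    have hαeq : α' = (1 + (lg*((m:ℝ)/(n:ℝ)) + lb*(1-(m:ℝ)/(n:ℝ))))
        / ((lg*((m:ℝ)/(n:ℝ)) + lb*(1-(m:ℝ)/(n:ℝ)))
          + (lg*((m:ℝ)/(n:ℝ)) + lb*(1-(m:ℝ)/(n:ℝ)))*(lb*((m:ℝ)/(n:ℝ)) + lg*(1-(m:ℝ)/(n:ℝ)))) := by
      rw [hα', hl0, hl1]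
    have hβeq : β' = (1 + (lb*((m:ℝ)/(n:ℝ)) + lg*(1-(m:ℝ)/(n:ℝ))))
        / ((lb*((m:ℝ)/(n:ℝ)) + lg*(1-(m:ℝ)/(n:ℝ)))
          + (lg*((m:ℝ)/(n:ℝ)) + lb*(1-(m:ℝ)/(n:ℝ)))*(lb*((m:ℝ)/(n:ℝ)) + lg*(1-(m:ℝ)/(n:ℝ)))) := by
      rw [hβ', hl0, hl1]
    have hkey : ∃ vG vB ev : ℝ, 0 < vG ∧ 0 < vB ∧ 0 ≤ ev ∧ ev < 1 ∧
        (∀ vg vb : ℝ, vg = vG → vb = vB →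
          (1-dt)*(lb*β'*((1-dt)*(lg*α'*vg) + dt*(((m:ℝ)/(n:ℝ))*(lg*α'*vg) + (1-(m:ℝ)/(n:ℝ))*(lb*α'*vb))))
            + dt*(((m:ℝ)/(n:ℝ))*(lb*β'*((1-dt)*(lg*α'*vg) + dt*(((m:ℝ)/(n:ℝ))*(lg*α'*vg) + (1-(m:ℝ)/(n:ℝ))*(lb*α'*vb))))
                 + (1-(m:ℝ)/(n:ℝ))*(lg*β'*((1-dt)*(lb*α'*vb) + dt*(((m:ℝ)/(n:ℝ))*(lg*α'*vg) + (1-(m:ℝ)/(n:ℝ))*(lb*α'*vb))))) = ev*vg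
          ∧
          (1-dt)*(lg*β'*((1-dt)*(lb*α'*vb) + dt*(((m:ℝ)/(n:ℝ))*(lg*α'*vg) + (1-(m:ℝ)/(n:ℝ))*(lb*α'*vb))))
            + dt*(((m:ℝ)/(n:ℝ))*(lb*β'*((1-dt)*(lg*α'*vg) + dt*(((m:ℝ)/(n:ℝ))*(lg*α'*vg) + (1-(m:ℝ)/(n:ℝ))*(lb*α'*vb))))
                 + (1-(m:ℝ)/(n:ℝ))*(lg*β'*((1-dt)*(lb*α'*vb) + dt*(((m:ℝ)/(n:ℝ))*(lg*α'*vg) + (1-(m:ℝ)/(n:ℝ))*(lb*α'*vb))))) = ev*vb) := by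
      rcases eq_or_lt_of_le hdt0 with h0 | h0
      · exact key_perron0 lg lb ((m:ℝ)/(n:ℝ)) dt α' β' hlb hlbg hp0 hp1 h0.symm hαeq hβeq
      · exact key_perron lg lb ((m:ℝ)/(n:ℝ)) (1-dt) dt α' β' hlb hlbg hp0 hp1 h0 hdt1 rfl hαeq hβeq
    obtain ⟨vG, vB, ev, hvG, hvB, hev0, hev1, hrows⟩ := hkey
    obtain ⟨hrow1, hrow2⟩ := hrows vG vB rfl rfl
    obtain ⟨v, hvdef⟩ : ∃ v : Fin n → ℝ, v = fun j => if lam 0 j = lg then vG else vB := ⟨_, rfl⟩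
    have hv : ∀ k, 0 < v k := by
      intro k
      simp only [hvdef]
      by_cases hk : lam 0 k = lg
      · rw [if_pos hk]; exact hvG
      · rw [if_neg hk]; exact hvB
    -- entrywise nonnegativity
    have hAent : ∀ k j, 0 ≤ ((1-dt) • (1:Matrix (Fin n) (Fin n) ℝ) + dt • S) k j := by
      intro k j
      rw [Matrix.add_apply, Matrix.smul_apply, Matrix.smul_apply, hS k j, smul_eq_mul, smul_eq_mul]
      have h1n : (0:ℝ) ≤ 1/(n:ℝ) := by positivity
      by_cases hkj : k = j
      · rw [hkj, Matrix.one_apply_eq]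
        have := mul_nonneg hdt0 h1n
        nlinarith
      · rw [Matrix.one_apply_ne hkj]
        have := mul_nonneg hdt0 h1n
        nlinarith
    have hlamnn : ∀ (t : Fin 2) k, 0 ≤ lam t k := by
      intro t k
      rcases hval t k with h | h <;> rw [h] <;> linarith
    have hFent : ∀ (t : Fin 2) k j, 0 ≤ (F t) k j := by
      intro t k j
      rw [hF t, Matrix.diagonal_apply]
      by_cases hkj : k = j
      · rw [if_pos hkj, hfdiag t k]
        have h2 : 0 ≤ (1 + lbar t)/(lbar t + lbar 0 * lbar 1) :=
          le_of_lt (div_pos (h1l t) (hden t))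
        exact mul_nonneg (hlamnn t k) h2
      · rw [if_neg hkj]
    have hent : ∀ k j, 0 ≤ (((1-dt) • (1:Matrix (Fin n) (Fin n) ℝ) + dt • S) * F 1
        * (((1-dt) • (1:Matrix (Fin n) (Fin n) ℝ) + dt • S) * F 0)) k j := by
      intro k j
      rw [Matrix.mul_apply]
      refine Finset.sum_nonneg fun l _ => mul_nonneg ?_ ?_
      · rw [Matrix.mul_apply]
        exact Finset.sum_nonneg fun i _ => mul_nonneg (hAent k i) (hFent 1 i l)
      · rw [Matrix.mul_apply]
        exact Finset.sum_nonneg fun i _ => mul_nonneg (hAent l i) (hFent 0 i j)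
    -- mulVec computations
    have hdiv : ∀ x y : ℝ, ((m:ℝ)*x + ((n:ℝ)-(m:ℝ))*y)/(n:ℝ)
        = ((m:ℝ)/(n:ℝ))*x + (1-(m:ℝ)/(n:ℝ))*y := by
      intro x y
      field_simp
      try ring
    have hAmul : ∀ w : Fin n → ℝ, (((1-dt) • (1:Matrix (Fin n) (Fin n) ℝ) + dt • S).mulVec w)
        = fun k => (1-dt)*(w k) + dt*((∑ j, w j)/(n:ℝ)) := by
      intro w
      funext k
      have hSw : S.mulVec w k = (∑ j, w j)/(n:ℝ) := by
        calc S.mulVec w k = ∑ j, S k j * w j := by simp [Matrix.mulVec, dotProduct]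
          _ = ∑ j, w j/(n:ℝ) := Finset.sum_congr rfl (fun j _ => by rw [hS k j]; ring)
          _ = (∑ j, w j)/(n:ℝ) := by rw [Finset.sum_div]
      rw [Matrix.add_mulVec, Matrix.smul_mulVec, Matrix.smul_mulVec, Matrix.one_mulVec]
      rw [Pi.add_apply, Pi.smul_apply, Pi.smul_apply, smul_eq_mul, smul_eq_mul, hSw]
    have hw1 : (F 0).mulVec v = fun j => if lam 0 j = lg then lg*α'*vG else lb*α'*vB := by
      funext j
      simp only [hF, Matrix.mulVec_diagonal, hvdef]
      rw [hfdiag 0 j, ← hα']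
      by_cases hj : lam 0 j = lg
      · rw [if_pos hj, if_pos hj, hj]
        try ring
      · rw [if_neg hj, if_neg hj, hlam0b j hj]
        try ring
    have hS1 : (∑ j, (if lam 0 j = lg then lg*α'*vG else lb*α'*vB))
        = (m:ℝ)*(lg*α'*vG) + ((n:ℝ)-(m:ℝ))*(lb*α'*vB) := hsum_ite _ _
    obtain ⟨u2G, hu2G⟩ : ∃ x : ℝ, x = (1-dt)*(lg*α'*vG)
        + dt*(((m:ℝ)/(n:ℝ))*(lg*α'*vG) + (1-(m:ℝ)/(n:ℝ))*(lb*α'*vB)) := ⟨_, rfl⟩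
    obtain ⟨u2B, hu2B⟩ : ∃ x : ℝ, x = (1-dt)*(lb*α'*vB)
        + dt*(((m:ℝ)/(n:ℝ))*(lg*α'*vG) + (1-(m:ℝ)/(n:ℝ))*(lb*α'*vB)) := ⟨_, rfl⟩
    have hw2 : (((1-dt) • (1:Matrix (Fin n) (Fin n) ℝ) + dt • S).mulVec ((F 0).mulVec v))
        = fun j => if lam 0 j = lg then u2G else u2B := by
      funext j
      simp only [hw1, hAmul, hS1, hdiv]
      by_cases hj : lam 0 j = lg
      · rw [if_pos hj, if_pos hj, hu2G]
      · rw [if_neg hj, if_neg hj, hu2B]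
    have hw3 : (F 1).mulVec (fun j => if lam 0 j = lg then u2G else u2B)
        = fun j => if lam 0 j = lg then lb*β'*u2G else lg*β'*u2B := by
      funext j
      simp only [hF, Matrix.mulVec_diagonal]
      rw [hfdiag 1 j, ← hβ']
      by_cases hj : lam 0 j = lg
      · rw [if_pos hj, if_pos hj, hlam1g j hj]
        try ring
      · rw [if_neg hj, if_neg hj, hlam1b j hj]
        try ring
    have hS3 : (∑ j, (if lam 0 j = lg then lb*β'*u2G else lg*β'*u2B))
        = (m:ℝ)*(lb*β'*u2G) + ((n:ℝ)-(m:ℝ))*(lg*β'*u2B) := hsum_ite _ _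
    -- final bound
    have hfinal : ∀ k, ((((1-dt) • (1:Matrix (Fin n) (Fin n) ℝ) + dt • S) * F 1
        * (((1-dt) • (1:Matrix (Fin n) (Fin n) ℝ) + dt • S) * F 0)).mulVec v) k ≤ ev * v k := by
      intro k
      have hsplit : (((1-dt) • (1:Matrix (Fin n) (Fin n) ℝ) + dt • S) * F 1
          * (((1-dt) • (1:Matrix (Fin n) (Fin n) ℝ) + dt • S) * F 0)).mulVec v
          = ((1-dt) • (1:Matrix (Fin n) (Fin n) ℝ) + dt • S).mulVec
              ((F 1).mulVec ((((1-dt) • (1:Matrix (Fin n) (Fin n) ℝ) + dt • S)).mulVec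
                ((F 0).mulVec v))) := by
        rw [← Matrix.mulVec_mulVec, ← Matrix.mulVec_mulVec, ← Matrix.mulVec_mulVec]
      rw [hsplit, hw2, hw3, hAmul]
      simp only [hS3, hdiv, hvdef]
      by_cases hk : lam 0 k = lg
      · rw [if_pos hk, if_pos hk]
        refine le_of_eq ?_
        rw [← hrow1, hu2G, hu2B]
        try ring
      · rw [if_neg hk, if_neg hk]
        refine le_of_eq ?_
        rw [← hrow2, hu2G, hu2B]
        try ring
    calc specRad (((1-dt) • 1 + dt • S) * F 1 * (((1-dt) • 1 + dt • S) * F 0))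
        ≤ ev := specRad_le_of_dom _ hent v hv ev hev0 hfinal
      _ < 1 := hev1
end

section
/- Consider the periodically forced Beverton–Holt model on n ≥ 2 patches with period-2 intrinsic fitnesses λ_t^j > 0, a > 0, λ̄_t = (1/n)∑_j λ_t^j, λ̄₁λ̄₂ > 1, uniform dispersal S_{kj} = 1/n, and the period-2 orbit x̂^j(t) = (λ̄₁λ̄₂ − 1)/(a(1 + λ̄_t)) of the fully dispersive phenotype d = 1. Let F_t be the diagonal matrix with entries (F_t)_{jj} = λ_t^j/(1 + a x̂^j(t)); assume F₁ ≠ F₂ and that F_t is non-scalar for some t. If d = 1 is a Nash equilibrium, i.e. the spectral radius ρ(S(d̃)F₂S(d̃)F₁) ≤ 1 for every d̃ ∈ [0, 1] where S(d̃) = (1−d̃)I + d̃S, then λ₁^j λ₂^j ≤ λ̄₁λ̄₂ for every patch j, and the inequality is strict for at least one j. -/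
open Matrix

/-- An eigenvalue (witnessed by a nonzero eigenvector) belongs to the spectrum. -/
lemma mem_spectrum_of_mulVec {n : ℕ} (M : Matrix (Fin n) (Fin n) ℂ) (μ : ℂ)
    (v : Fin n → ℂ) (hv : v ≠ 0) (h : M.mulVec v = μ • v) :
    μ ∈ spectrum ℂ M := by
  rw [spectrum.mem_iff]
  intro hu
  have hdet : (algebraMap ℂ (Matrix (Fin n) (Fin n) ℂ) μ - M).det = 0 := by
    rw [← Matrix.exists_mulVec_eq_zero_iff]
    refine ⟨v, hv, ?_⟩
    rw [Matrix.sub_mulVec, Algebra.algebraMap_eq_smul_one, Matrix.smul_mulVec,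
      Matrix.one_mulVec, h, sub_self]
  rw [Matrix.isUnit_iff_isUnit_det, hdet] at hu
  simpa using hu

/-- The modulus of any element of the complex spectrum is at most the spectral radius. -/
lemma abs_le_specRad {n : ℕ} {M : Matrix (Fin n) (Fin n) ℝ} {μ : ℂ}
    (h : μ ∈ spectrum ℂ (M.map (fun x => (x : ℂ)))) : ‖μ‖ ≤ specRad M := by
  apply le_csSup
  · exact ((Matrix.finite_spectrum _).image _).bddAbove
  · exact ⟨μ, h, rfl⟩

/-- In the periodically forced Beverton–Holt model with uniform dispersal: if full
dispersal `d = 1` is a Nash equilibrium (every mutant dispersal rate `d̃ ∈ [0,1]` has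
invasion rate at most one along the period-2 orbit of the fully dispersive resident),
then `λ₁ʲλ₂ʲ ≤ λ̄₁λ̄₂` for every patch `j`, with a strict inequality for some `j`. -/
theorem full_dispersal_nash_necessary {n : ℕ} (hn : 2 ≤ n)
    (a : ℝ) (ha : 0 < a)
    (lam : Fin 2 → Fin n → ℝ) (hlam : ∀ t j, 0 < lam t j)
    (lbar : Fin 2 → ℝ) (hlbar : ∀ t, lbar t = (∑ j, lam t j) / n)
    (hpersist : 1 < lbar 0 * lbar 1)
    (xhat : Fin 2 → Fin n → ℝ)
    (hxhat : ∀ t j, xhat t j = (lbar 0 * lbar 1 - 1) / (a * (1 + lbar t)))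
    (S : Matrix (Fin n) (Fin n) ℝ) (hS : ∀ k j, S k j = 1 / n)
    (F : Fin 2 → Matrix (Fin n) (Fin n) ℝ)
    (hF : ∀ t, F t = Matrix.diagonal fun j => lam t j / (1 + a * xhat t j))
    (htemp : F 0 ≠ F 1)
    (hspat : ∃ t, ∃ j k, (F t).diag j ≠ (F t).diag k)
    (hnash : ∀ dt : ℝ, 0 ≤ dt → dt ≤ 1 →
      specRad (((1 - dt) • 1 + dt • S) * F 1 * (((1 - dt) • 1 + dt • S) * F 0)) ≤ 1) :
    (∀ j, lam 0 j * lam 1 j ≤ lbar 0 * lbar 1) ∧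
    (∃ j, lam 0 j * lam 1 j < lbar 0 * lbar 1) := by
  have hnpos : 0 < n := lt_of_lt_of_le (by norm_num) hn
  have hnR : (0:ℝ) < (n:ℝ) := by exact_mod_cast hnpos
  haveI : Nonempty (Fin n) := ⟨⟨0, hnpos⟩⟩
  set L : ℝ := lbar 0 * lbar 1 with hL
  have hLpos : 0 < L := lt_trans one_pos hpersist
  -- positivity of the mean fitnesses
  have hlbarpos : ∀ t, 0 < lbar t := by
    intro t
    rw [hlbar t]
    apply div_pos _ hnR
    exact Finset.sum_pos (fun j _ => hlam t j) Finset.univ_nonempty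
  -- the within-patch fitness along the orbit
  set g : Fin 2 → Fin n → ℝ := fun t j => lam t j / (1 + a * xhat t j) with hg
  have hden : ∀ t j, 1 + a * xhat t j = (lbar t + L) / (1 + lbar t) := by
    intro t j
    rw [hxhat t j]
    have h1 : (1:ℝ) + lbar t ≠ 0 := by have := hlbarpos t; positivity
    field_simp
    ring
  have hdenpos : ∀ t j, 0 < 1 + a * xhat t j := by
    intro t j
    rw [hden t j]
    have := hlbarpos t
    positivity
  have hgpos : ∀ t j, 0 < g t j := fun t j => div_pos (hlam t j) (hdenpos t j)
  have hgprod : ∀ j, g 0 j * g 1 j = lam 0 j * lam 1 j / L := by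
    intro j
    have hdd : (1 + a * xhat 0 j) * (1 + a * xhat 1 j) = L := by
      rw [hden 0 j, hden 1 j]
      have h0 : (1:ℝ) + lbar 0 ≠ 0 := by have := hlbarpos 0; positivity
      have h1 : (1:ℝ) + lbar 1 ≠ 0 := by have := hlbarpos 1; positivity
      rw [div_mul_div_comm, hL]
      rw [div_eq_iff (by positivity)]
      ring
    rw [hg]
    simp only
    rw [div_mul_div_comm, hdd]
  have hFg : ∀ t, F t = Matrix.diagonal (g t) := hF
  -- Step 1: from dt = 0, every diagonal entry of F 1 * F 0 is at most 1
  have hdiag_le : ∀ j, g 1 j * g 0 j ≤ 1 := by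
    intro j
    have h0 := hnash 0 le_rfl zero_le_one
    have e0 : ((1 - (0:ℝ)) • (1 : Matrix (Fin n) (Fin n) ℝ) + (0:ℝ) • S) = 1 := by
      simp
    rw [e0, one_mul, one_mul] at h0
    have hM : F 1 * F 0 = Matrix.diagonal (fun j => g 1 j * g 0 j) := by
      rw [hFg 1, hFg 0, Matrix.diagonal_mul_diagonal]
    -- the diagonal entry is an eigenvalue
    have hmem : ((g 1 j * g 0 j : ℝ) : ℂ) ∈
        spectrum ℂ ((F 1 * F 0).map (fun x => (x : ℂ))) := by
      apply mem_spectrum_of_mulVec _ _ (Pi.single j 1)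
      · intro hcon
        have := congrFun hcon j
        simp at this
      · rw [hM, Matrix.diagonal_map Complex.ofReal_zero]
        funext i
        rw [Matrix.mulVec_diagonal]
        by_cases hij : i = j
        · subst hij; simp
        · simp [Pi.single_apply, hij]
    have := abs_le_specRad hmem
    rw [Complex.norm_real, Real.norm_eq_abs, abs_of_pos (mul_pos (hgpos 1 j) (hgpos 0 j))] at this
    linarith [h0]
  have part1 : ∀ j, lam 0 j * lam 1 j ≤ L := by
    intro j
    have h := hdiag_le j
    rw [mul_comm, hgprod j] at h
    calc lam 0 j * lam 1 j = lam 0 j * lam 1 j / L * L := by field_simp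
    _ ≤ 1 * L := by apply mul_le_mul_of_nonneg_right h hLpos.le
    _ = L := one_mul L
  refine ⟨part1, ?_⟩
  -- Step 2: strictness somewhere, by contradiction
  by_contra hcon
  push_neg at hcon
  have heq : ∀ j, lam 0 j * lam 1 j = L := fun j => le_antisymm (part1 j) (hcon j)
  have hone : ∀ j, g 0 j * g 1 j = 1 := by
    intro j
    rw [hgprod j, heq j, div_self hLpos.ne']
  have hinv : ∀ j, g 1 j = (g 0 j)⁻¹ := fun j =>
    eq_inv_of_mul_eq_one_right (hone j)
  -- nonconstancy of g 0
  obtain ⟨t, j0, k0, hne⟩ := hspat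
  have hne0 : g 0 j0 ≠ g 0 k0 := by
    have hdiagt : ∀ t, (F t).diag = g t := by
      intro t; rw [hFg t, Matrix.diag_diagonal]
    rw [hdiagt t] at hne
    have ht : t = 0 ∨ t = 1 := by
      rcases t with ⟨tv, htv⟩
      interval_cases tv
      · exact Or.inl rfl
      · exact Or.inr rfl
    rcases ht with rfl | rfl
    · exact hne
    · intro hcon2
      apply hne
      rw [hinv j0, hinv k0, hcon2]
  -- the key strict inequality  n² < (∑ g1)(∑ g0)
  set A : ℝ := ∑ l, g 1 l with hA
  set B : ℝ := ∑ l, g 0 l with hB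
  have hApos : 0 < A := Finset.sum_pos (fun l _ => hgpos 1 l) Finset.univ_nonempty
  have hBpos : 0 < B := Finset.sum_pos (fun l _ => hgpos 0 l) Finset.univ_nonempty
  have hAB : (n:ℝ) * n < A * B := by
    have hprodsum : A * B = ∑ p : Fin n × Fin n, g 0 p.2 / g 0 p.1 := by
      rw [hA, hB, Fintype.sum_mul_sum]
      rw [Fintype.sum_prod_type]
      apply Finset.sum_congr rfl
      intro i _
      apply Finset.sum_congr rfl
      intro l _
      rw [hinv i, div_eq_mul_inv, mul_comm]
    have hswap : (∑ p : Fin n × Fin n, g 0 p.2 / g 0 p.1)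
        = ∑ p : Fin n × Fin n, g 0 p.1 / g 0 p.2 := by
      rw [Fintype.sum_prod_type, Fintype.sum_prod_type]
      exact Finset.sum_comm
    have hhalf : ∑ p : Fin n × Fin n, (g 0 p.2 / g 0 p.1 + g 0 p.1 / g 0 p.2) / 2
        = ∑ p : Fin n × Fin n, g 0 p.2 / g 0 p.1 := by
      rw [← Finset.sum_div, Finset.sum_add_distrib, ← hswap]
      ring
    have hcount : (n:ℝ) * n = ∑ _p : Fin n × Fin n, (1:ℝ) := by
      simp [Finset.card_univ]
    rw [hcount, hprodsum, ← hhalf]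
    apply Finset.sum_lt_sum
    · intro p _
      have hx := hgpos 0 p.1
      have hy := hgpos 0 p.2
      rw [le_div_iff₀ (by norm_num : (0:ℝ) < 2), div_add_div _ _ hx.ne' hy.ne',
        le_div_iff₀ (mul_pos hx hy)]
      nlinarith [sq_nonneg (g 0 p.1 - g 0 p.2)]
    · refine ⟨(j0, k0), Finset.mem_univ _, ?_⟩
      have hx := hgpos 0 j0
      have hy := hgpos 0 k0
      have hsq : 0 < (g 0 j0 - g 0 k0) * (g 0 j0 - g 0 k0) :=
        mul_self_pos.mpr (sub_ne_zero.mpr hne0)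
      rw [lt_div_iff₀ (by norm_num : (0:ℝ) < 2), div_add_div _ _ hx.ne' hy.ne',
        lt_div_iff₀ (mul_pos hx hy)]
      nlinarith
  -- compute the invasion matrix at dt = 1 and its Perron eigenvalue
  set c : ℝ := A * B / ((n:ℝ) * n) with hc
  have hc1 : 1 < c := by
    rw [hc, lt_div_iff₀ (by positivity)]
    linarith
  set M : Matrix (Fin n) (Fin n) ℝ := S * F 1 * (S * F 0) with hMdef
  have hSF1 : ∀ k l, (S * F 1) k l = 1 / n * g 1 l := by
    intro k l
    rw [hFg 1, Matrix.mul_diagonal, hS]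
  have hSF0 : ∀ k l, (S * F 0) k l = 1 / n * g 0 l := by
    intro k l
    rw [hFg 0, Matrix.mul_diagonal, hS]
  have hMentry : ∀ k j, M k j = A / ((n:ℝ) * n) * g 0 j := by
    intro k j
    rw [hMdef, Matrix.mul_apply]
    have : ∀ l, (S * F 1) k l * (S * F 0) l j
        = g 1 l * (1 / n * (1 / n * g 0 j)) := by
      intro l
      rw [hSF1 k l, hSF0 l j]
      ring
    rw [Finset.sum_congr rfl (fun l _ => this l), ← Finset.sum_mul, ← hA]
    field_simp
  have hMrow : ∀ k, ∑ j, M k j = c := by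
    intro k
    rw [Finset.sum_congr rfl (fun j _ => hMentry k j), ← Finset.mul_sum, ← hB, hc]
    ring
  have hmemc : ((c : ℝ) : ℂ) ∈ spectrum ℂ (M.map (fun x => (x : ℂ))) := by
    apply mem_spectrum_of_mulVec _ _ (fun _ => 1)
    · intro hcon2
      have := congrFun hcon2 ⟨0, hnpos⟩
      simp at this
    · funext k
      have : (M.map (fun x => (x : ℂ))).mulVec (fun _ => 1) k
          = ∑ j, ((M k j : ℝ) : ℂ) := by
        simp [Matrix.mulVec, Matrix.map_apply, dotProduct]
      rw [this]
      have : (∑ j, ((M k j : ℝ) : ℂ)) = (((∑ j, M k j : ℝ)) : ℂ) := by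
        push_cast
        rfl
      rw [this, hMrow k]
      simp
  have hspec := abs_le_specRad hmemc
  rw [Complex.norm_real, Real.norm_eq_abs, abs_of_pos (lt_trans one_pos hc1)] at hspec
  have h1 := hnash 1 zero_le_one le_rfl
  have e1 : ((1 - (1:ℝ)) • (1 : Matrix (Fin n) (Fin n) ℝ) + (1:ℝ) • S) = S := by
    simp
  rw [e1] at h1
  rw [← hMdef] at h1
  linarith
end
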